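/- In the dummy-adversary game, the user's optimal policy coincides with the optimal policy of the underlying MDP: let (S, A, P, r, γ) be a finite MDP with γ ∈ [0,1) and optimal Q-function Q*, let b_1,…,b_N ∈ ℝ, and let Q*_game be the unique fixed point of the dummy-adversary game Bellman operator (maxmin version). Then for every state s ∈ S, { a ∈ A : min_{i} Q*_game(s,a,i) = max_{a'∈A} min_{i} Q*_game(s,a',i) } = { a ∈ A : Q*(s,a) = max_{a'∈A} Q*(s,a') }; that is, the dummy adversary's actions do not alter the user's set of optimal greedy actions. -/

import Mathlib

/-- Maximum of a real-valued function over a nonempty finite type. -/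
noncomputable def fsup {β : Type*} [Fintype β] [Nonempty β] (f : β → ℝ) : ℝ :=
  Finset.univ.sup' Finset.univ_nonempty f

/-- Minimum of a real-valued function over a nonempty finite type. -/
noncomputable def finf {β : Type*} [Fintype β] [Nonempty β] (f : β → ℝ) : ℝ :=
  Finset.univ.inf' Finset.univ_nonempty f

/-- The Bellman optimality operator of a finite MDP. -/
noncomputable def bellman {S A : Type*} [Fintype S] [Nonempty S] [Fintype A] [Nonempty A]
    (P : S → A → S → ℝ) (r : S → A → S → ℝ) (γ : ℝ) (Q : S → A → ℝ) : S → A → ℝ :=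
  fun s a => ∑ s', P s a s' * (r s a s' + γ * fsup (fun a' => Q s' a'))

/-- The dummy-adversary game Bellman operator (maxmin version) with constant shifts
`b i`. -/
noncomputable def daqBellman {S A : Type*} [Fintype S] [Nonempty S] [Fintype A] [Nonempty A]
    {N : ℕ} [NeZero N]
    (P : S → A → S → ℝ) (r : S → A → S → ℝ) (γ : ℝ) (b : Fin N → ℝ)
    (Q : S → A → Fin N → ℝ) : S → A → Fin N → ℝ :=
  fun s a i => ∑ s', P s a s' *
    (r s a s' + b i + γ * fsup (fun a' => finf (fun j => Q s' a' j)))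

lemma fsup_add_const {β : Type*} [Fintype β] [Nonempty β] (f : β → ℝ) (c : ℝ) :
    fsup (fun x => f x + c) = fsup f + c := by
  unfold fsup
  rw [Finset.sup'_add]

lemma finf_add_const {β : Type*} [Fintype β] [Nonempty β] (f : β → ℝ) (c : ℝ) :
    finf (fun x => f x + c) = finf f + c := by
  unfold finf
  apply le_antisymm
  · obtain ⟨x, _, hx⟩ := Finset.exists_mem_eq_inf' (Finset.univ_nonempty (α := β)) f
    calc Finset.univ.inf' Finset.univ_nonempty (fun x => f x + c) ≤ f x + c :=
          Finset.inf'_le _ (Finset.mem_univ x)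
      _ = _ := by rw [hx]
  · apply Finset.le_inf'
    intro x _
    exact add_le_add_left (Finset.inf'_le _ (Finset.mem_univ x)) c

lemma abs_fsup_sub_fsup_le {β : Type*} [Fintype β] [Nonempty β] (f g : β → ℝ) (M : ℝ)
    (h : ∀ x, |f x - g x| ≤ M) : |fsup f - fsup g| ≤ M := by
  rw [abs_le]
  constructor
  · have : fsup g ≤ fsup f + M := by
      apply Finset.sup'_le
      intro x _
      have := (abs_le.1 (h x)).1
      have hfx : f x ≤ fsup f := Finset.le_sup' f (Finset.mem_univ x)
      linarith
    linarith
  · have : fsup f ≤ fsup g + M := by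
      apply Finset.sup'_le
      intro x _
      have := (abs_le.1 (h x)).2
      have hgx : g x ≤ fsup g := Finset.le_sup' g (Finset.mem_univ x)
      linarith
    linarith

/-- In the dummy-adversary game, the user's set of optimal greedy actions at every
state coincides with the set of greedy actions of the underlying MDP: the dummy
adversary's actions do not alter the user's optimal policy. -/
theorem daq_game_greedy_actions_eq_mdp_greedy_actions
    {S A : Type*} [Fintype S] [Nonempty S] [Fintype A] [Nonempty A]
    {N : ℕ} [NeZero N]
    (P : S → A → S → ℝ) (hP0 : ∀ s a s', 0 ≤ P s a s')
    (hP1 : ∀ s a, ∑ s', P s a s' = 1)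
    (r : S → A → S → ℝ) (γ : ℝ) (hγ : γ ∈ Set.Ico (0 : ℝ) 1)
    (b : Fin N → ℝ)
    (Qstar : S → A → ℝ) (hQstar : bellman P r γ Qstar = Qstar)
    (Qgame : S → A → Fin N → ℝ) (hQgame : daqBellman P r γ b Qgame = Qgame) :
    ∀ s : S,
      {a : A | finf (fun i => Qgame s a i) =
        fsup (fun a' => finf (fun i => Qgame s a' i))} =
      {a : A | Qstar s a = fsup (fun a' => Qstar s a')} := by
  obtain ⟨hγ0, hγ1⟩ := hγ
  have hNpos := NeZero.pos N
  haveI : Nonempty (Fin N) := ⟨⟨0, hNpos⟩⟩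
  set h : S → A → ℝ := fun s a => finf (fun i => Qgame s a i) with hh
  set m : ℝ := finf b with hm
  set c : ℝ := m / (1 - γ) with hc
  set Fh : S → ℝ := fun s' => fsup (fun a' => h s' a') with hFh
  set FQ : S → ℝ := fun s' => fsup (fun a' => Qstar s' a') with hFQ
  have h1γ : (1 : ℝ) - γ ≠ 0 := by linarith
  have hcm : c * (1 - γ) = m := by rw [hc]; field_simp
  have hcγ : m - c = -(γ * c) := by linear_combination (-1 : ℝ) * hcm
  -- key recursion for h
  have hrec : ∀ s a, h s a =
      (∑ s', P s a s' * (r s a s' + γ * Fh s')) + m := by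
    intro s a
    have hQ : ∀ i, Qgame s a i =
        (∑ s', P s a s' * (r s a s' + γ * Fh s')) + b i := by
      intro i
      conv_lhs => rw [← hQgame]
      show ∑ s', P s a s' * (r s a s' + b i + γ * Fh s') = _
      calc ∑ s', P s a s' * (r s a s' + b i + γ * Fh s')
          = (∑ s', P s a s' * (r s a s' + γ * Fh s')) + ∑ s', P s a s' * b i := by
            rw [← Finset.sum_add_distrib]
            exact Finset.sum_congr rfl fun s' _ => by ring
        _ = _ := by rw [← Finset.sum_mul, hP1 s a, one_mul]
    calc h s a = finf (fun i =>
          (∑ s', P s a s' * (r s a s' + γ * Fh s')) + b i) := by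
            simp only [hh]
            congr 1
            funext i
            rw [hQ i]
      _ = _ := by
            simp_rw [add_comm (∑ s', P s a s' * (r s a s' + γ * Fh s'))]
            rw [finf_add_const]
  have hQrec : ∀ s a, Qstar s a =
      ∑ s', P s a s' * (r s a s' + γ * FQ s') := by
    intro s a
    conv_lhs => rw [← hQstar]
    rfl
  -- error function
  set e : S × A → ℝ := fun p => h p.1 p.2 - Qstar p.1 p.2 - c with he
  set M : ℝ := fsup (fun p => |e p|) with hM
  have hMbound : ∀ s a, |h s a - Qstar s a - c| ≤ M := fun s a =>
    Finset.le_sup' (fun p => |e p|) (Finset.mem_univ (s, a))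
  have hΔ : ∀ s', |Fh s' - FQ s' - c| ≤ M := by
    intro s'
    have hshift : FQ s' + c = fsup (fun a' => Qstar s' a' + c) := by
      rw [fsup_add_const]
    have key : |Fh s' - fsup (fun a' => Qstar s' a' + c)| ≤ M := by
      apply abs_fsup_sub_fsup_le
      intro a'
      have h1 := hMbound s' a'
      have h2 : |h s' a' - (Qstar s' a' + c)| ≤ M := by
        convert h1 using 2
        ring
      exact h2
    calc |Fh s' - FQ s' - c|
        = |Fh s' - fsup (fun a' => Qstar s' a' + c)| := by
          rw [← hshift]; ring_nf
      _ ≤ M := key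
  have hcontract : ∀ s a, |e (s, a)| ≤ γ * M := by
    intro s a
    have heq : e (s, a) = γ * ∑ s', P s a s' * (Fh s' - FQ s' - c) := by
      have expand : (∑ s', γ * (P s a s' * (Fh s' - FQ s' - c)))
          = ∑ s', (P s a s' * (r s a s' + γ * Fh s')
              - P s a s' * (r s a s' + γ * FQ s') - γ * c * P s a s') :=
        Finset.sum_congr rfl (fun s' _ => by ring)
      have hPsum := hP1 s a
      simp only [he]
      rw [hrec s a, hQrec s a, Finset.mul_sum, expand,
        Finset.sum_sub_distrib, Finset.sum_sub_distrib, ← Finset.mul_sum, hPsum]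
      linarith [hcγ]
    rw [heq, abs_mul, abs_of_nonneg hγ0]
    apply mul_le_mul_of_nonneg_left _ hγ0
    calc |∑ s', P s a s' * (Fh s' - FQ s' - c)|
        ≤ ∑ s', |P s a s' * (Fh s' - FQ s' - c)| :=
          Finset.abs_sum_le_sum_abs _ _
      _ ≤ ∑ s', P s a s' * M := by
          apply Finset.sum_le_sum
          intro s' _
          rw [abs_mul, abs_of_nonneg (hP0 s a s')]
          exact mul_le_mul_of_nonneg_left (hΔ s') (hP0 s a s')
      _ = M := by rw [← Finset.sum_mul, hP1 s a, one_mul]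
  -- conclude M ≤ 0
  have hMle : M ≤ γ * M := by
    obtain ⟨p, _, hp⟩ := Finset.exists_mem_eq_sup' (Finset.univ_nonempty (α := S × A))
      (fun p => |e p|)
    calc M = |e p| := hp
      _ ≤ γ * M := by simpa using hcontract p.1 p.2
  have hM0 : M ≤ 0 := by nlinarith
  have hezero : ∀ s a, h s a = Qstar s a + c := by
    intro s a
    have h1 : |h s a - Qstar s a - c| ≤ 0 := le_trans (hMbound s a) hM0
    have h2 := abs_nonneg (h s a - Qstar s a - c)
    have h3 : |h s a - Qstar s a - c| = 0 := le_antisymm h1 h2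
    have h4 := abs_eq_zero.1 h3
    linarith
  -- conclude
  intro s
  ext a
  simp only [Set.mem_setOf_eq]
  have h2 : fsup (fun a' => h s a') = fsup (fun a' => Qstar s a') + c := by
    rw [← fsup_add_const]
    congr 1
    funext a'
    exact hezero s a'
  constructor
  · intro hEq
    have h3 : h s a = fsup (fun a' => h s a') := hEq
    rw [hezero s a, h2] at h3
    linarith
  · intro hEq
    show h s a = fsup (fun a' => h s a')
    rw [hezero s a, h2, hEq]
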